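/- For n ≥ 1 define Â_n(z) = ((1 + i c_1)/(2z))·[R_n(z) + ((1 - i c_1)/(2 d_1))·(z - 1)·Q_n(z)]. Then Â_n is a polynomial of degree n - 1 with leading coefficient ∏_{k=1}^n (1 + i c_k); moreover, denoting by z_{n,1}, ..., z_{n,n} the n simple unimodular zeros of R_n, the numbers λ̂_{n,j} = Â_n(z_{n,j}) / R_n'(z_{n,j}) are strictly positive real numbers with Σ_{j=1}^n λ̂_{n,j} = 1, and one has the partial fraction decomposition Â_n(z)/R_n(z) = Σ_{j=1}^n λ̂_{n,j}/(z - z_{n,j}). -/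

import Mathlib

open Polynomial MeasureTheory Finset
open scoped ComplexConjugate

/-- The polynomials `R_n` defined by the three term recurrence
`R_{n+1}(z) = [(1+i c_{n+1}) z + (1-i c_{n+1})] R_n(z) - 4 d_{n+1} z R_{n-1}(z)`. -/
noncomputable def Rpoly (c d : ℕ → ℝ) : ℕ → Polynomial ℂ
  | 0 => 1
  | 1 => C (1 + Complex.I * (c 1 : ℂ)) * X + C (1 - Complex.I * (c 1 : ℂ))
  | (n + 2) =>
      (C (1 + Complex.I * (c (n + 2) : ℂ)) * X + C (1 - Complex.I * (c (n + 2) : ℂ))) *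
          Rpoly c d (n + 1)
        - C (4 * (d (n + 2) : ℂ)) * X * Rpoly c d n

/-- The polynomials `Q_n` satisfying the same recurrence with `Q_0 = 0`, `Q_1 = 2 d_1`. -/
noncomputable def Qpoly (c d : ℕ → ℝ) : ℕ → Polynomial ℂ
  | 0 => 0
  | 1 => C (2 * (d 1 : ℂ))
  | (n + 2) =>
      (C (1 + Complex.I * (c (n + 2) : ℂ)) * X + C (1 - Complex.I * (c (n + 2) : ℂ))) *
          Qpoly c d (n + 1)
        - C (4 * (d (n + 2) : ℂ)) * X * Qpoly c d n


/-- `g` is a parameter sequence for the sequence `d_1, d_2, …`: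
`0 ≤ g_0 < 1`, `0 < g_n < 1` for `n ≥ 1`, and `d_n = (1 - g_{n-1}) g_n` for `n ≥ 1`. -/
def IsParamSeq (d g : ℕ → ℝ) : Prop :=
  0 ≤ g 0 ∧ g 0 < 1 ∧ (∀ n, 1 ≤ n → 0 < g n ∧ g n < 1) ∧
    ∀ n, 1 ≤ n → d n = (1 - g (n - 1)) * g n

/-- `d_1, d_2, …` is a positive chain sequence. -/
def IsPositiveChainSeq (d : ℕ → ℝ) : Prop := ∃ g, IsParamSeq d g

namespace Stmt9
variable (c d : ℕ → ℝ)

lemma one_add_ne (x : ℝ) : (1 : ℂ) + Complex.I * x ≠ 0 := by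
  intro h
  have := congrArg Complex.re h
  simp [Complex.add_re] at this

lemma one_sub_ne (x : ℝ) : (1 : ℂ) - Complex.I * x ≠ 0 := by
  intro h
  have := congrArg Complex.re h
  simp [Complex.sub_re] at this

lemma lin_deg (a b : ℂ) : (C a * X + C b).natDegree ≤ 1 :=
  (natDegree_add_le _ _).trans (by
    simp only [natDegree_C, max_le_iff]
    exact ⟨(natDegree_C_mul_le _ _).trans (by simp), Nat.zero_le _⟩)

lemma R_deg_le : ∀ n, (Rpoly c d n).natDegree ≤ n := by
  have key : ∀ n, (Rpoly c d n).natDegree ≤ n ∧ (Rpoly c d (n+1)).natDegree ≤ n+1 := by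
    intro n
    induction n with
    | zero => exact ⟨by simp [Rpoly], by rw [Rpoly]; exact lin_deg _ _⟩
    | succ m ih =>
      refine ⟨ih.2, ?_⟩
      show (Rpoly c d (m+2)).natDegree ≤ m + 2
      rw [Rpoly]
      refine (natDegree_sub_le _ _).trans (max_le ?_ ?_)
      · exact natDegree_mul_le.trans (by have := lin_deg (1 + Complex.I * (c (m+2) : ℂ)) (1 - Complex.I * (c (m+2) : ℂ)); have := ih.2; omega)
      · refine natDegree_mul_le.trans ?_
        have h2 : (C (4 * (d (m + 2) : ℂ)) * X).natDegree ≤ 1 :=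
          (natDegree_C_mul_le _ _).trans (by simp)
        have := ih.1; omega
  exact fun n => (key n).1

lemma Q_deg_le : ∀ n, (Qpoly c d n).natDegree ≤ n - 1 := by
  have key : ∀ n, (Qpoly c d n).natDegree ≤ n - 1 ∧ (Qpoly c d (n+1)).natDegree ≤ n := by
    intro n
    induction n with
    | zero => exact ⟨by simp [Qpoly], by rw [Qpoly]; exact (natDegree_C _).le⟩
    | succ m ih =>
      refine ⟨by simpa using ih.2, ?_⟩
      show (Qpoly c d (m+2)).natDegree ≤ m + 1
      rw [Qpoly]
      refine (natDegree_sub_le _ _).trans (max_le ?_ ?_)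
      · exact natDegree_mul_le.trans (by have := lin_deg (1 + Complex.I * (c (m+2) : ℂ)) (1 - Complex.I * (c (m+2) : ℂ)); have := ih.2; omega)
      · refine natDegree_mul_le.trans ?_
        have h2 : (C (4 * (d (m + 2) : ℂ)) * X).natDegree ≤ 1 :=
          (natDegree_C_mul_le _ _).trans (by simp)
        have := ih.1; omega
  exact fun n => (key n).1

lemma coeff_linmul (a b : ℂ) (p : Polynomial ℂ) (k : ℕ) :
    ((C a * X + C b) * p).coeff (k+1) = a * p.coeff k + b * p.coeff (k+1) := by
  rw [add_mul, mul_assoc, coeff_add, coeff_C_mul, coeff_C_mul, coeff_X_mul]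

lemma coeff_CXmul (e : ℂ) (p : Polynomial ℂ) (k : ℕ) :
    (C e * X * p).coeff (k+1) = e * p.coeff k := by
  rw [mul_assoc, coeff_C_mul, coeff_X_mul]

lemma R_coeff : ∀ n, (Rpoly c d n).coeff n = ∏ k ∈ Icc 1 n, (1 + Complex.I * (c k : ℂ)) := by
  have key : ∀ n, (Rpoly c d n).coeff n = ∏ k ∈ Icc 1 n, (1 + Complex.I * (c k : ℂ)) ∧
      (Rpoly c d (n+1)).coeff (n+1) = ∏ k ∈ Icc 1 (n+1), (1 + Complex.I * (c k : ℂ)) := by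
    intro n
    induction n with
    | zero =>
      refine ⟨by simp [Rpoly], ?_⟩
      rw [Rpoly]
      simp [coeff_add, coeff_C_mul, coeff_C, coeff_one]
    | succ m ih =>
      refine ⟨ih.2, ?_⟩
      show (Rpoly c d (m+2)).coeff (m+2) = _
      rw [Rpoly, coeff_sub, coeff_linmul, coeff_CXmul,
        coeff_eq_zero_of_natDegree_lt
          (show (Rpoly c d (m+1)).natDegree < m + 1 + 1 by have := R_deg_le c d (m+1); omega),
        coeff_eq_zero_of_natDegree_lt
          (show (Rpoly c d m).natDegree < m + 1 by have := R_deg_le c d m; omega),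
        Finset.prod_Icc_succ_top (by omega : 1 ≤ m + 2), ih.2]
      ring
  exact fun n => (key n).1

lemma Q_coeff : ∀ n, (Qpoly c d (n+1)).coeff n
    = 2 * (d 1 : ℂ) * ∏ k ∈ Icc 2 (n+1), (1 + Complex.I * (c k : ℂ)) := by
  have key : ∀ n, ((Qpoly c d (n+1)).coeff n
      = 2 * (d 1 : ℂ) * ∏ k ∈ Icc 2 (n+1), (1 + Complex.I * (c k : ℂ))) ∧
      ((Qpoly c d (n+2)).coeff (n+1)
      = 2 * (d 1 : ℂ) * ∏ k ∈ Icc 2 (n+2), (1 + Complex.I * (c k : ℂ))) := by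
    intro n
    induction n with
    | zero =>
      constructor
      · rw [Qpoly]; simp
      · rw [Qpoly]
        rw [coeff_sub, coeff_linmul, coeff_CXmul]
        simp [Qpoly, coeff_C, Finset.Icc_self]
        ring
    | succ m ih =>
      refine ⟨ih.2, ?_⟩
      show (Qpoly c d (m+3)).coeff (m+2) = _
      rw [Qpoly, coeff_sub, coeff_linmul, coeff_CXmul,
        coeff_eq_zero_of_natDegree_lt
          (show (Qpoly c d (m+2)).natDegree < m + 1 + 1 by have := Q_deg_le c d (m+2); omega),
        coeff_eq_zero_of_natDegree_lt
          (show (Qpoly c d (m+1)).natDegree < m + 1 by have := Q_deg_le c d (m+1); omega),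
        Finset.prod_Icc_succ_top (by omega : 2 ≤ m + 3), ih.2]
      ring

  exact fun n => (key n).1

lemma lead_ne (n : ℕ) : (∏ k ∈ Icc 1 n, (1 + Complex.I * (c k : ℂ))) ≠ 0 :=
  Finset.prod_ne_zero_iff.2 fun k _ => one_add_ne (c k)

lemma lead2_ne (n : ℕ) : (∏ k ∈ Icc 2 n, (1 + Complex.I * (c k : ℂ))) ≠ 0 :=
  Finset.prod_ne_zero_iff.2 fun k _ => one_add_ne (c k)

lemma R_natDegree (n : ℕ) : (Rpoly c d n).natDegree = n :=
  le_antisymm (R_deg_le c d n)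
    (le_natDegree_of_ne_zero (by rw [R_coeff]; exact lead_ne c n))

lemma R_ne_zero (n : ℕ) : Rpoly c d n ≠ 0 := fun h => by
  have := R_coeff c d n
  rw [h] at this
  exact lead_ne c n (by simpa using this.symm)

lemma R_leadingCoeff (n : ℕ) :
    (Rpoly c d n).leadingCoeff = ∏ k ∈ Icc 1 n, (1 + Complex.I * (c k : ℂ)) := by
  rw [leadingCoeff, R_natDegree, R_coeff]

lemma R_eval0 : ∀ n, (Rpoly c d n).eval 0 = ∏ k ∈ Icc 1 n, (1 - Complex.I * (c k : ℂ)) := by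
  have key : ∀ n, ((Rpoly c d n).eval 0 = ∏ k ∈ Icc 1 n, (1 - Complex.I * (c k : ℂ))) ∧
      ((Rpoly c d (n+1)).eval 0 = ∏ k ∈ Icc 1 (n+1), (1 - Complex.I * (c k : ℂ))) := by
    intro n
    induction n with
    | zero => exact ⟨by simp [Rpoly], by rw [Rpoly]; simp⟩
    | succ m ih =>
      refine ⟨ih.2, ?_⟩
      show (Rpoly c d (m+2)).eval 0 = _
      rw [Rpoly]
      simp only [eval_sub, eval_mul, eval_add, eval_C, eval_X, mul_zero, zero_mul, add_zero,
        zero_add, sub_zero, mul_comm]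
      rw [Finset.prod_Icc_succ_top (by omega : 1 ≤ m + 2), ih.2]
      ring
  exact fun n => (key n).1

lemma Q_eval0 : ∀ n, (Qpoly c d (n+1)).eval 0
    = 2 * (d 1 : ℂ) * ∏ k ∈ Icc 2 (n+1), (1 - Complex.I * (c k : ℂ)) := by
  have key : ∀ n, ((Qpoly c d (n+1)).eval 0
      = 2 * (d 1 : ℂ) * ∏ k ∈ Icc 2 (n+1), (1 - Complex.I * (c k : ℂ))) ∧
      ((Qpoly c d (n+2)).eval 0
      = 2 * (d 1 : ℂ) * ∏ k ∈ Icc 2 (n+2), (1 - Complex.I * (c k : ℂ))) := by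
    intro n
    induction n with
    | zero =>
      constructor
      · rw [Qpoly]; simp
      · rw [Qpoly]
        simp [Qpoly, Finset.Icc_self]
        ring
    | succ m ih =>
      refine ⟨ih.2, ?_⟩
      show (Qpoly c d (m+3)).eval 0 = _
      rw [Qpoly]
      simp only [eval_sub, eval_mul, eval_add, eval_C, eval_X, mul_zero, zero_mul, add_zero,
        zero_add, sub_zero]
      rw [Finset.prod_Icc_succ_top (by omega : 2 ≤ m + 3), ih.2]
      ring
  exact fun n => (key n).1

/-- the sequence `R_n(1) = un n`. -/
noncomputable def un (d : ℕ → ℝ) : ℕ → ℝ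
  | 0 => 1
  | 1 => 2
  | (n+2) => 2 * un d (n+1) - 4 * d (n+2) * un d n

lemma R_eval1 : ∀ n, (Rpoly c d n).eval 1 = ((un d n : ℝ) : ℂ) := by
  have key : ∀ n, ((Rpoly c d n).eval 1 = ((un d n : ℝ) : ℂ)) ∧
      ((Rpoly c d (n+1)).eval 1 = ((un d (n+1) : ℝ) : ℂ)) := by
    intro n
    induction n with
    | zero => exact ⟨by simp [Rpoly, un], by rw [Rpoly]; simp [un]; ring⟩
    | succ m ih =>
      refine ⟨ih.2, ?_⟩
      show (Rpoly c d (m+2)).eval 1 = _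
      rw [Rpoly]
      simp only [eval_sub, eval_mul, eval_add, eval_C, eval_X, mul_one, one_mul]
      rw [ih.1, ih.2, show un d (m+2) = 2 * un d (m+1) - 4 * d (m+2) * un d m from rfl]
      push_cast
      ring
  exact fun n => (key n).1

lemma un_pos (g : ℕ → ℝ) (hg0 : 0 ≤ g 0) (hg1 : ∀ n, g n < 1) (hgp : ∀ n, 1 ≤ n → 0 < g n)
    (hdg : ∀ n, d (n + 2) = (1 - g n) * g (n+1)) : ∀ n, 0 < un d n := by
  have key : ∀ n, 0 < un d n ∧ 2 * (1 - g n) * un d n ≤ un d (n+1) := by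
    intro n
    induction n with
    | zero =>
      refine ⟨by norm_num [un], ?_⟩
      show 2 * (1 - g 0) * 1 ≤ 2
      nlinarith
    | succ m ih =>
      have hm1 : 0 < un d (m+1) := lt_of_lt_of_le (by nlinarith [ih.1, hg1 m]) ih.2
      have hgm : 0 < g (m+1) := hgp (m+1) (by omega)
      have hrec : un d (m+2) = 2 * un d (m+1) - 4 * ((1 - g m) * g (m+1)) * un d m := by
        rw [un, hdg m]
      refine ⟨hm1, ?_⟩
      rw [hrec]; nlinarith [ih.1, ih.2, hg1 (m+1)]
  exact fun n => (key n).1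

lemma wronski : ∀ n, Rpoly c d (n+1) * Qpoly c d n - Qpoly c d (n+1) * Rpoly c d n
    = -C (2 * (d 1 : ℂ) * ∏ k ∈ Icc 2 (n+1), (4 * (d k : ℂ))) * X ^ n := by
  intro n
  induction n with
  | zero =>
    rw [Rpoly, Qpoly, Qpoly, Rpoly]
    rw [show Finset.Icc 2 1 = (∅ : Finset ℕ) from rfl]
    simp
  | succ m ih =>
    have step : Rpoly c d (m+2) * Qpoly c d (m+1) - Qpoly c d (m+2) * Rpoly c d (m+1)
        = C (4 * (d (m+2) : ℂ)) * X *
          (Rpoly c d (m+1) * Qpoly c d m - Qpoly c d (m+1) * Rpoly c d m) := by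
      rw [Rpoly, Qpoly]
      ring
    rw [step, ih, Finset.prod_Icc_succ_top (by omega : 2 ≤ m + 2)]
    simp only [map_mul]
    ring

/-- real function with `R_n(e^{iθ}) = e^{inθ/2} fn n θ`. -/
noncomputable def fn (c d : ℕ → ℝ) : ℕ → ℝ → ℝ
  | 0, _ => 1
  | 1, θ => 2 * (Real.cos (θ/2) - c 1 * Real.sin (θ/2))
  | (n+2), θ => 2 * (Real.cos (θ/2) - c (n+2) * Real.sin (θ/2)) * fn c d (n+1) θ
      - 4 * d (n+2) * fn c d n θ

lemma linphase (a θ : ℝ) :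
    (1 + Complex.I * (a : ℂ)) * Complex.exp ((θ : ℂ) * Complex.I) + (1 - Complex.I * (a : ℂ))
      = Complex.exp (((θ/2 : ℝ) : ℂ) * Complex.I) *
          ((2 * (Real.cos (θ/2) - a * Real.sin (θ/2)) : ℝ) : ℂ) := by
  have h2 : ((θ : ℂ) * Complex.I) = (((θ/2 : ℝ) : ℂ) * Complex.I) + (((θ/2 : ℝ) : ℂ) * Complex.I) := by
    push_cast; ring
  rw [h2, Complex.exp_add]
  simp only [Complex.exp_mul_I, Complex.ofReal_mul, Complex.ofReal_sub, Complex.ofReal_ofNat,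
    Complex.ofReal_cos, Complex.ofReal_sin]
  have h := Complex.sin_sq_add_cos_sq (((θ/2 : ℝ) : ℂ))
  have hI := Complex.I_sq
  linear_combination (Complex.I * (a : ℂ) - 1) * h +
    (2 * (a:ℂ) * Complex.cos (((θ/2:ℝ):ℂ)) * Complex.sin (((θ/2:ℝ):ℂ))
      + Complex.sin (((θ/2:ℝ):ℂ))^2 + Complex.I * (a:ℂ) * Complex.sin (((θ/2:ℝ):ℂ))^2) * hI

lemma expsq (θ : ℝ) : Complex.exp ((θ : ℂ) * Complex.I)
    = Complex.exp (((θ/2 : ℝ) : ℂ) * Complex.I) ^ 2 := by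
  rw [← Complex.exp_nat_mul]
  push_cast
  ring_nf

lemma R_eval_exp : ∀ m (θ : ℝ), (Rpoly c d m).eval (Complex.exp ((θ : ℂ) * Complex.I))
    = Complex.exp (((θ/2 : ℝ) : ℂ) * Complex.I) ^ m * ((fn c d m θ : ℝ) : ℂ) := by
  have key : ∀ m (θ : ℝ), ((Rpoly c d m).eval (Complex.exp ((θ : ℂ) * Complex.I))
      = Complex.exp (((θ/2 : ℝ) : ℂ) * Complex.I) ^ m * ((fn c d m θ : ℝ) : ℂ)) ∧
      ((Rpoly c d (m+1)).eval (Complex.exp ((θ : ℂ) * Complex.I))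
      = Complex.exp (((θ/2 : ℝ) : ℂ) * Complex.I) ^ (m+1) * ((fn c d (m+1) θ : ℝ) : ℂ)) := by
    intro m
    induction m with
    | zero =>
      intro θ
      refine ⟨by simp [Rpoly, fn], ?_⟩
      rw [Rpoly]
      simp only [eval_add, eval_mul, eval_C, eval_X]
      rw [linphase (c 1) θ]
      simp [fn]
    | succ m ih =>
      intro θ
      refine ⟨(ih θ).2, ?_⟩
      show (Rpoly c d (m+2)).eval _ = _
      rw [Rpoly]
      simp only [eval_sub, eval_mul, eval_add, eval_C, eval_X]
      rw [linphase (c (m+2)) θ, (ih θ).1, (ih θ).2, expsq θ,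
        show fn c d (m+2) θ = 2 * (Real.cos (θ/2) - c (m+2) * Real.sin (θ/2)) * fn c d (m+1) θ
          - 4 * d (m+2) * fn c d m θ from rfl]
      push_cast
      ring
  exact fun m θ => (key m θ).1

lemma fn_zero_eq : ∀ m, fn c d m 0 = un d m := by
  have key : ∀ m, fn c d m 0 = un d m ∧ fn c d (m+1) 0 = un d (m+1) := by
    intro m
    induction m with
    | zero => exact ⟨rfl, by show fn c d 1 0 = un d 1; simp [fn, un]⟩
    | succ m ih =>
      refine ⟨ih.2, ?_⟩
      show fn c d (m+2) 0 = un d (m+2)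
      rw [show fn c d (m+2) 0 = 2 * (Real.cos (0/2) - c (m+2) * Real.sin (0/2)) * fn c d (m+1) 0
          - 4 * d (m+2) * fn c d m 0 from rfl, un, ih.1, ih.2]
      norm_num
  exact fun m => (key m).1

lemma fn_two_pi_eq : ∀ m, fn c d m (2 * Real.pi) = (-1) ^ m * un d m := by
  have key : ∀ m, fn c d m (2*Real.pi) = (-1) ^ m * un d m ∧
      fn c d (m+1) (2*Real.pi) = (-1) ^ (m+1) * un d (m+1) := by
    intro m
    induction m with
    | zero =>
      refine ⟨by simp [fn, un], ?_⟩
      show fn c d 1 (2*Real.pi) = _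
      rw [show fn c d 1 (2*Real.pi)
          = 2 * (Real.cos (2*Real.pi/2) - c 1 * Real.sin (2*Real.pi/2)) from rfl]
      rw [show (2*Real.pi/2) = Real.pi by ring]
      simp [un]
    | succ m ih =>
      refine ⟨ih.2, ?_⟩
      show fn c d (m+2) (2*Real.pi) = _
      rw [show fn c d (m+2) (2*Real.pi)
          = 2 * (Real.cos (2*Real.pi/2) - c (m+2) * Real.sin (2*Real.pi/2)) * fn c d (m+1) (2*Real.pi)
          - 4 * d (m+2) * fn c d m (2*Real.pi) from rfl, un, ih.1, ih.2]
      rw [show (2*Real.pi/2) = Real.pi by ring]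
      simp only [Real.cos_pi, Real.sin_pi]
      ring

  exact fun m => (key m).1

lemma fn_differentiable : ∀ m, Differentiable ℝ (fn c d m) := by
  have key : ∀ m, Differentiable ℝ (fn c d m) ∧ Differentiable ℝ (fn c d (m+1)) := by
    intro m
    induction m with
    | zero =>
      constructor
      · show Differentiable ℝ (fun _ => (1:ℝ))
        fun_prop
      · show Differentiable ℝ (fun θ => 2 * (Real.cos (θ/2) - c 1 * Real.sin (θ/2)))
        fun_prop
    | succ m ih =>
      refine ⟨ih.2, ?_⟩
      show Differentiable ℝ (fun θ => 2 * (Real.cos (θ/2) - c (m+2) * Real.sin (θ/2)) * fn c d (m+1) θ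
          - 4 * d (m+2) * fn c d m θ)
      have h1 := ih.1
      have h2 := ih.2
      fun_prop
  exact fun m => (key m).1

lemma fn_continuous (m : ℕ) : Continuous (fn c d m) := (fn_differentiable c d m).continuous

lemma deriv_identity (m : ℕ) (θ : ℝ) (hθ : fn c d m θ = 0) :
    Complex.I * Complex.exp ((θ : ℂ) * Complex.I) *
        (derivative (Rpoly c d m)).eval (Complex.exp ((θ : ℂ) * Complex.I))
      = Complex.exp (((θ/2 : ℝ) : ℂ) * Complex.I) ^ m * ((deriv (fn c d m) θ : ℝ) : ℂ) := by
  have hR : HasDerivAt (fun t : ℝ => (Rpoly c d m).eval (Complex.exp ((t : ℂ) * Complex.I)))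
      ((derivative (Rpoly c d m)).eval (Complex.exp ((θ : ℂ) * Complex.I)) *
        (Complex.exp ((θ : ℂ) * Complex.I) * Complex.I)) θ := by
    have hinner : HasDerivAt (fun w : ℂ => Complex.exp (w * Complex.I))
        (Complex.exp ((θ : ℂ) * Complex.I) * Complex.I) (θ : ℂ) := by
      simpa using (((hasDerivAt_id ((θ : ℝ) : ℂ)).mul_const Complex.I).cexp)
    have houter := Polynomial.hasDerivAt (Rpoly c d m) (Complex.exp ((θ : ℂ) * Complex.I))
    have := (houter.comp ((θ : ℝ) : ℂ) hinner)
    exact this.comp_ofReal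
  have hfn : HasDerivAt (fn c d m) (deriv (fn c d m) θ) θ :=
    (fn_differentiable c d m θ).hasDerivAt
  have hfnC : HasDerivAt (fun t : ℝ => ((fn c d m t : ℝ) : ℂ)) ((deriv (fn c d m) θ : ℝ) : ℂ) θ :=
    hfn.ofReal_comp
  have hphase : HasDerivAt (fun t : ℝ => Complex.exp ((t : ℂ) * ((m : ℂ)/2 * Complex.I)))
      (Complex.exp ((θ : ℂ) * ((m : ℂ)/2 * Complex.I)) * ((m : ℂ)/2 * Complex.I)) θ := by
    have := (((hasDerivAt_id ((θ : ℝ) : ℂ)).mul_const ((m : ℂ)/2 * Complex.I)).cexp).comp_ofReal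
    simpa using this
  have hprod := hphase.mul hfnC
  have funeq : ∀ t : ℝ, Complex.exp (((t/2 : ℝ) : ℂ) * Complex.I) ^ m
      = Complex.exp ((t : ℂ) * ((m : ℂ)/2 * Complex.I)) := by
    intro t
    rw [← Complex.exp_nat_mul]
    congr 1
    push_cast
    ring
  have hgeq : (fun t : ℝ => (Rpoly c d m).eval (Complex.exp ((t : ℂ) * Complex.I)))
      = fun t : ℝ => Complex.exp ((t : ℂ) * ((m : ℂ)/2 * Complex.I)) * ((fn c d m t : ℝ) : ℂ) := by
    funext t
    rw [R_eval_exp c d m t, funeq t]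
  rw [hgeq] at hR
  have huniq := hR.unique hprod
  rw [hθ] at huniq
  rw [funeq θ]
  push_cast at huniq ⊢
  linear_combination huniq

lemma exp_inj {x y : ℝ} (hx0 : 0 ≤ x) (hx1 : x < 2*Real.pi) (hy0 : 0 ≤ y) (hy1 : y < 2*Real.pi)
    (h : Complex.exp ((x:ℂ) * Complex.I) = Complex.exp ((y:ℂ) * Complex.I)) : x = y := by
  rw [Complex.exp_eq_exp_iff_exists_int] at h
  obtain ⟨k, hk⟩ := h
  have h2 : ((x - y - 2*Real.pi*k : ℝ) : ℂ) * Complex.I = 0 := by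
    push_cast
    linear_combination hk
  have h3 : ((x - y - 2*Real.pi*k : ℝ) : ℂ) = 0 :=
    (mul_eq_zero.1 h2).resolve_right Complex.I_ne_zero
  have h4 : x - y - 2*Real.pi*k = 0 := by exact_mod_cast h3
  have hπ := Real.pi_pos
  have h5 : (k:ℝ) < 1 := by nlinarith
  have h6 : (-1:ℝ) < k := by nlinarith
  have h7 : k = 0 := by
    have : (k:ℝ) = 0 := by
      have h5' : k < 1 := by exact_mod_cast h5
      have h6' : -1 < k := by exact_mod_cast h6
      have : k = 0 := by omega
      simp [this]
    exact_mod_cast this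
  rw [h7] at h4
  push_cast at h4
  linarith

lemma zeros_card (m : ℕ) (s : Finset ℝ)
    (hs : ∀ x ∈ s, 0 ≤ x ∧ x < 2*Real.pi ∧ fn c d m x = 0) : s.card ≤ m := by
  classical
  have hinj : Set.InjOn (fun x : ℝ => Complex.exp ((x:ℂ) * Complex.I)) s := by
    intro x hx y hy hxy
    exact exp_inj (hs x hx).1 (hs x hx).2.1 (hs y hy).1 (hs y hy).2.1 hxy
  have hsub : s.image (fun x : ℝ => Complex.exp ((x:ℂ) * Complex.I))
      ⊆ (Rpoly c d m).roots.toFinset := by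
    intro w hw
    obtain ⟨x, hx, rfl⟩ := Finset.mem_image.1 hw
    rw [Multiset.mem_toFinset, mem_roots (R_ne_zero c d m)]
    show (Rpoly c d m).eval _ = 0
    rw [R_eval_exp c d m x, (hs x hx).2.2]
    simp
  calc s.card = (s.image _).card := (Finset.card_image_of_injOn hinj).symm
    _ ≤ (Rpoly c d m).roots.toFinset.card := Finset.card_le_card hsub
    _ ≤ Multiset.card (Rpoly c d m).roots := (Rpoly c d m).roots.toFinset_card_le
    _ ≤ (Rpoly c d m).natDegree := (Rpoly c d m).card_roots'
    _ = m := R_natDegree c d m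

lemma exists_zero_Ioo {f : ℝ → ℝ} (hf : Continuous f) {a b : ℝ} (hab : a < b)
    (h : f a * f b < 0) : ∃ x, a < x ∧ x < b ∧ f x = 0 := by
  rcases mul_neg_iff.1 h with ⟨ha, hb⟩ | ⟨ha, hb⟩
  · have := intermediate_value_Ioo' hab.le hf.continuousOn
    have h0 : (0:ℝ) ∈ Set.Ioo (f b) (f a) := ⟨hb, ha⟩
    obtain ⟨x, hx, hfx⟩ := this h0
    exact ⟨x, hx.1, hx.2, hfx⟩
  · have := intermediate_value_Ioo hab.le hf.continuousOn
    have h0 : (0:ℝ) ∈ Set.Ioo (f a) (f b) := ⟨ha, hb⟩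
    obtain ⟨x, hx, hfx⟩ := this h0
    exact ⟨x, hx.1, hx.2, hfx⟩

lemma same_sign {f : ℝ → ℝ} (hf : Continuous f) (a b : ℝ)
    (hno : ∀ y ∈ Set.uIcc a b, f y ≠ 0) : 0 < f a * f b := by
  rcases lt_trichotomy (f a * f b) 0 with h | h | h
  · exfalso
    rcases le_total a b with hab | hab
    · rcases lt_or_eq_of_le hab with hab | rfl
      · obtain ⟨x, hx1, hx2, hx3⟩ := exists_zero_Ioo hf hab h
        exact hno x (by rw [Set.uIcc_of_le hab.le]; exact ⟨hx1.le, hx2.le⟩) hx3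
      · nlinarith
    · rcases lt_or_eq_of_le hab with hab | rfl
      · obtain ⟨x, hx1, hx2, hx3⟩ := exists_zero_Ioo hf hab (by nlinarith)
        exact hno x (by rw [Set.uIcc_of_ge hab.le]; exact ⟨hx1.le, hx2.le⟩) hx3
      · nlinarith
  · exfalso
    rcases mul_eq_zero.1 h with h | h
    · exact hno a Set.left_mem_uIcc h
    · exact hno b Set.right_mem_uIcc h
  · exact h

lemma gap_index (ψ : ℕ → ℝ) (m : ℕ) (hmono : ∀ i j, i < j → j < m → ψ i < ψ j) (x : ℝ)
    (hne : ∀ i, i < m → ψ i ≠ x) :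
    ∃ j, j ≤ m ∧ (∀ i, i < j → ψ i < x) ∧ (∀ i, j ≤ i → i < m → x < ψ i) := by
  have hex : ∃ i, i = m ∨ (i < m ∧ x < ψ i) := ⟨m, Or.inl rfl⟩
  classical
  let j := Nat.find hex
  have hj := Nat.find_spec hex
  have hjle : j ≤ m := by
    rcases hj with h | h
    · exact h.le
    · exact h.1.le
  refine ⟨j, hjle, ?_, ?_⟩
  · intro i hi
    have := Nat.find_min hex hi
    push_neg at this
    have him : i < m := lt_of_lt_of_le hi hjle
    exact lt_of_le_of_ne (this.2 him) (hne i him)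
  · intro i hij him
    have hxj : x < ψ j := by
      rcases hj with h | h
      · omega
      · exact h.2
    rcases eq_or_lt_of_le hij with rfl | hij
    · exact hxj
    · exact hxj.trans (hmono j i hij him)

/-- Zero package: `ψ 0 < ... < ψ (m-1)` are zeros of `fn m` in `(0, 2π)`, with sign data. -/
def Pkg (c d : ℕ → ℝ) (m : ℕ) (ψ : ℕ → ℝ) : Prop :=
  (∀ i j, i < j → j < m → ψ i < ψ j) ∧
  (∀ i, i < m → 0 < ψ i ∧ ψ i < 2*Real.pi) ∧
  (∀ i, i < m → fn c d m (ψ i) = 0) ∧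
  (∀ i, i < m → 0 < (-1)^i * fn c d (m-1) (ψ i)) ∧
  (∀ x, 0 < x → x < 2*Real.pi → fn c d m x ≠ 0 →
    ∀ j, j ≤ m → (∀ i, i < j → ψ i < x) → (∀ i, j ≤ i → i < m → x < ψ i) →
      0 < (-1)^j * fn c d m x)

lemma pkg_exists (hun : ∀ k, 0 < un d k) (hdpos : ∀ k, 2 ≤ k → 0 < d k) :
    ∀ m, ∃ ψ, Pkg c d m ψ := by
  intro m
  induction m with
  | zero =>
    refine ⟨fun _ => 0, by omega, by omega, by omega, by omega, ?_⟩
    intro x hx0 hx1 hne j hj _ _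
    interval_cases j
    show 0 < (-1:ℝ)^0 * fn c d 0 x
    norm_num [fn]
  | succ m ih =>
    obtain ⟨ψ, hmono, hmem, hzero, hsign, hgap⟩ := ih
    have hπ := Real.pi_pos
    set F := fn c d (m+1) with hF
    -- the comparison points
    set pts : ℕ → ℝ := fun i => if i = 0 then 0 else if i ≤ m then ψ (i-1) else 2*Real.pi
      with hptsdef
    have hpts0 : pts 0 = 0 := by simp [hptsdef]
    have hptsmid : ∀ i, 1 ≤ i → i ≤ m → pts i = ψ (i-1) := by
      intro i h1 h2
      simp only [hptsdef]
      rw [if_neg (by omega), if_pos h2]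
    have hptstop : pts (m+1) = 2*Real.pi := by
      simp only [hptsdef]
      rw [if_neg (by omega), if_neg (by omega)]
    have hpts_lt : ∀ i j, i < j → j ≤ m+1 → pts i < pts j := by
      intro i j hij hj
      rcases Nat.eq_or_lt_of_le hj with rfl | hj'
      · rw [hptstop]
        rcases Nat.eq_zero_or_pos i with rfl | hi
        · rw [hpts0]; positivity
        · rw [hptsmid i hi (by omega)]
          exact (hmem (i-1) (by omega)).2
      · have hjm : j ≤ m := by omega
        have hj1 : 1 ≤ j := by omega
        rw [hptsmid j hj1 hjm]
        rcases Nat.eq_zero_or_pos i with rfl | hi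
        · rw [hpts0]; exact (hmem (j-1) (by omega)).1
        · rw [hptsmid i hi (by omega)]
          exact hmono (i-1) (j-1) (by omega) (by omega)
    have hpts_le : ∀ i j, i ≤ j → j ≤ m+1 → pts i ≤ pts j := by
      intro i j hij hj
      rcases Nat.eq_or_lt_of_le hij with rfl | h
      · exact le_refl _
      · exact (hpts_lt i j h hj).le
    have hpts_nonneg : ∀ i, i ≤ m+1 → 0 ≤ pts i := by
      intro i hi
      rcases Nat.eq_zero_or_pos i with rfl | h
      · rw [hpts0]
      · rw [← hpts0]; exact hpts_le 0 i (by omega) hi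
    have hpts_le_2pi : ∀ i, i ≤ m+1 → pts i ≤ 2*Real.pi := by
      intro i hi
      rw [← hptstop]; exact hpts_le i (m+1) hi (by omega)
    -- alternating signs of F at pts
    have hF0 : F 0 = un d (m+1) := fn_zero_eq c d (m+1)
    have hF2π : F (2*Real.pi) = (-1)^(m+1) * un d (m+1) := fn_two_pi_eq c d (m+1)
    have hFne0 : F 0 ≠ 0 := by rw [hF0]; exact (hun (m+1)).ne'
    have hFne2π : F (2*Real.pi) ≠ 0 := by
      rw [hF2π]
      intro h
      rcases mul_eq_zero.1 h with h | h
      · exact (pow_ne_zero _ (by norm_num) h)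
      · exact (hun (m+1)).ne' h
    have hsgn : ∀ i, i ≤ m+1 → 0 < (-1)^i * F (pts i) := by
      intro i hi
      rcases Nat.eq_zero_or_pos i with rfl | hi0
      · rw [hpts0, hF0]
        simpa using hun (m+1)
      rcases Nat.eq_or_lt_of_le hi with rfl | hilt
      · rw [hptstop, hF2π, ← mul_assoc, ← pow_add]
        have : Even (m+1+(m+1)) := ⟨m+1, by ring⟩
        rw [this.neg_one_pow, one_mul]
        exact hun (m+1)
      · -- middle points: use the recurrence
        have him : i ≤ m := by omega
        rw [hptsmid i hi0 him]
        have hm1 : 1 ≤ m := by omega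
        have hrec : F (ψ (i-1)) = 2 * (Real.cos (ψ (i-1)/2) - c (m+1) * Real.sin (ψ (i-1)/2))
            * fn c d m (ψ (i-1)) - 4 * d (m+1) * fn c d (m-1) (ψ (i-1)) := by
          obtain ⟨k, rfl⟩ : ∃ k, m = k + 1 := ⟨m-1, by omega⟩
          rfl
        rw [hrec, hzero (i-1) (by omega), mul_zero, zero_sub]
        have hd := hdpos (m+1) (by omega)
        have hs := hsign (i-1) (by omega)
        have hneg : ((-1:ℝ))^i = -((-1:ℝ))^(i-1) := by
          obtain ⟨k, rfl⟩ : ∃ k, i = k + 1 := ⟨i-1, by omega⟩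
          simp [pow_succ]
        rw [hneg]
        nlinarith
    -- construct the new zeros by IVT
    have hFcont : Continuous F := fn_continuous c d (m+1)
    have hz : ∀ i, i ≤ m → ∃ x, pts i < x ∧ x < pts (i+1) ∧ F x = 0 := by
      intro i hi
      apply exists_zero_Ioo hFcont (hpts_lt i (i+1) (by omega) (by omega))
      have h1 := hsgn i (by omega)
      have h2 := hsgn (i+1) (by omega)
      have ha : ((-1:ℝ))^i * ((-1:ℝ))^i = 1 := by
        rw [← pow_add]
        have hev : Even (i+i) := ⟨i, by ring⟩
        exact hev.neg_one_pow
      rw [pow_succ] at h2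
      nlinarith
    classical
    set θ' : ℕ → ℝ := fun i => if h : i ≤ m then (hz i h).choose else 0 with hθ'def
    have hθ'spec : ∀ i, i ≤ m → pts i < θ' i ∧ θ' i < pts (i+1) ∧ F (θ' i) = 0 := by
      intro i hi
      simp only [hθ'def, dif_pos hi]
      exact ⟨(hz i hi).choose_spec.1, (hz i hi).choose_spec.2.1, (hz i hi).choose_spec.2.2⟩
    have hθ'mem : ∀ i, i < m+1 → 0 < θ' i ∧ θ' i < 2*Real.pi := by
      intro i hi
      obtain ⟨h1, h2, _⟩ := hθ'spec i (by omega)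
      constructor
      · exact lt_of_le_of_lt (hpts_nonneg i (by omega)) h1
      · exact lt_of_lt_of_le h2 (hpts_le_2pi (i+1) (by omega))
    have hθ'mono : ∀ i j, i < j → j < m+1 → θ' i < θ' j := by
      intro i j hij hj
      obtain ⟨_, h2, _⟩ := hθ'spec i (by omega)
      obtain ⟨h1, _, _⟩ := hθ'spec j (by omega)
      exact h2.trans_le ((hpts_le (i+1) j (by omega) (by omega)).trans h1.le)
    -- exactness for fn m : every zero in (0,2π) is one of ψ
    have hexact_m : ∀ y, 0 < y → y < 2*Real.pi → fn c d m y = 0 → ∃ i, i < m ∧ y = ψ i := by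
      intro y hy0 hy1 hy
      by_contra hcon
      push_neg at hcon
      have hyne : ∀ i, i < m → ψ i ≠ y := fun i hi h => hcon i hi h.symm
      have himage : ((Finset.range m).image ψ).card = m := by
        rw [Finset.card_image_of_injOn, Finset.card_range]
        intro a ha b hb hab
        simp only [Finset.mem_coe, Finset.mem_range] at ha hb
        by_contra hne
        rcases Nat.lt_or_ge a b with h | h
        · exact absurd hab (hmono a b h hb).ne
        · exact absurd hab.symm (hmono b a (by omega) ha).ne
      have hcard := zeros_card c d m (insert y ((Finset.range m).image ψ)) ?_
      · rw [Finset.card_insert_of_notMem ?_, himage] at hcard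
        · omega
        · intro hmem'
          obtain ⟨i, hi, hyi⟩ := Finset.mem_image.1 hmem'
          exact hyne i (Finset.mem_range.1 hi) hyi
      · intro x hx
        rcases Finset.mem_insert.1 hx with rfl | hx
        · exact ⟨hy0.le, hy1, hy⟩
        · obtain ⟨i, hi, rfl⟩ := Finset.mem_image.1 hx
          have hi' := Finset.mem_range.1 hi
          exact ⟨(hmem i hi').1.le, (hmem i hi').2, hzero i hi'⟩
    -- exactness for F : every zero in (0,2π) is one of θ'
    have hexact_F : ∀ y, 0 < y → y < 2*Real.pi → F y = 0 → ∃ i, i < m+1 ∧ y = θ' i := by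
      intro y hy0 hy1 hy
      by_contra hcon
      push_neg at hcon
      have hyne : ∀ i, i < m+1 → θ' i ≠ y := fun i hi h => hcon i hi h.symm
      have himage : ((Finset.range (m+1)).image θ').card = m+1 := by
        rw [Finset.card_image_of_injOn, Finset.card_range]
        intro a ha b hb hab
        simp only [Finset.mem_coe, Finset.mem_range] at ha hb
        by_contra hne
        rcases Nat.lt_or_ge a b with h | h
        · exact absurd hab (hθ'mono a b h hb).ne
        · exact absurd hab.symm (hθ'mono b a (by omega) ha).ne
      have hcard := zeros_card c d (m+1) (insert y ((Finset.range (m+1)).image θ')) ?_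
      · rw [Finset.card_insert_of_notMem ?_, himage] at hcard
        · omega
        · intro hmem'
          obtain ⟨i, hi, hyi⟩ := Finset.mem_image.1 hmem'
          exact hyne i (Finset.mem_range.1 hi) hyi
      · intro x hx
        rcases Finset.mem_insert.1 hx with rfl | hx
        · exact ⟨hy0.le, hy1, hy⟩
        · obtain ⟨i, hi, rfl⟩ := Finset.mem_image.1 hx
          have hi' := Finset.mem_range.1 hi
          exact ⟨(hθ'mem i hi').1.le, (hθ'mem i hi').2, (hθ'spec i (by omega)).2.2⟩
    refine ⟨θ', hθ'mono, hθ'mem, fun i hi => (hθ'spec i (by omega)).2.2, ?_, ?_⟩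
    · -- sign of fn m at the new zeros
      intro i hi
      simp only [Nat.add_sub_cancel]
      obtain ⟨hl, hr, _⟩ := hθ'spec i (by omega)
      have hmm := hθ'mem i hi
      have hne : fn c d m (θ' i) ≠ 0 := by
        intro h0
        obtain ⟨k, hk, hyk⟩ := hexact_m (θ' i) hmm.1 hmm.2 h0
        have hpk : pts (k+1) = ψ k := by
          rw [hptsmid (k+1) (by omega) (by omega)]
          simp
        rcases Nat.lt_or_ge (k+1) (i+1) with h | h
        · have hle := hpts_le (k+1) i (by omega) (by omega)
          rw [hpk] at hle
          rw [hyk] at hl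
          linarith
        · have hle := hpts_le (i+1) (k+1) (by omega) (by omega)
          rw [hpk] at hle
          rw [hyk] at hr
          linarith
      apply hgap (θ' i) hmm.1 hmm.2 hne i (by omega)
      · intro k hk
        have hpk : pts (k+1) = ψ k := by
          rw [hptsmid (k+1) (by omega) (by omega)]
          simp
        have hle := hpts_le (k+1) i (by omega) (by omega)
        rw [hpk] at hle
        linarith
      · intro k hk1 hk2
        have hpk : pts (k+1) = ψ k := by
          rw [hptsmid (k+1) (by omega) (by omega)]
          simp
        have hle := hpts_le (i+1) (k+1) (by omega) (by omega)
        rw [hpk] at hle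
        linarith
    · -- gap signs for F
      intro x hx0 hx1 hxne j hj hbelow habove
      have hnoz : ∀ y ∈ Set.uIcc x (pts j), F y ≠ 0 := by
        intro y hy hy0
        have hylow : x ⊓ pts j ≤ y := hy.1
        have hyhigh : y ≤ x ⊔ pts j := hy.2
        have hy0' : 0 ≤ y :=
          le_trans (le_inf hx0.le (hpts_nonneg j hj)) hylow
        have hy1' : y ≤ 2*Real.pi :=
          le_trans hyhigh (sup_le hx1.le (hpts_le_2pi j hj))
        rcases eq_or_lt_of_le hy0' with rfl | hy0''
        · exact hFne0 hy0
        rcases eq_or_lt_of_le hy1' with rfl | hy1''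
        · exact hFne2π hy0
        obtain ⟨k, hk, rfl⟩ := hexact_F y hy0'' hy1'' hy0
        rcases Nat.lt_or_ge k j with h | h
        · -- θ' k below both x and pts j
          have h1 : θ' k < x := hbelow k h
          have h2 : θ' k < pts j := by
            have := (hθ'spec k (by omega)).2.1
            exact lt_of_lt_of_le this (hpts_le (k+1) j (by omega) hj)
          have := lt_inf_iff.2 ⟨h1, h2⟩
          linarith
        · -- θ' k above both
          have h1 : x < θ' k := habove k h hk
          have h2 : pts j < θ' k := by
            have := (hθ'spec k (by omega)).1
            exact lt_of_le_of_lt (hpts_le j k h (by omega)) this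
          have := sup_lt_iff.2 ⟨h1, h2⟩
          linarith
      have hss := same_sign hFcont x (pts j) hnoz
      have hsj := hsgn j hj
      have hrne := hnoz (pts j) Set.right_mem_uIcc
      have h2 : 0 < F (pts j)^2 := by positivity
      nlinarith [mul_pos hsj hss]

lemma factorization (n : ℕ) (z : Fin n → ℂ) (hzinj : Function.Injective z)
    (hzroot : ∀ j, (Rpoly c d n).eval (z j) = 0) :
    Rpoly c d n = C (∏ k ∈ Icc 1 n, (1 + Complex.I * (c k : ℂ))) * ∏ j, (X - C (z j)) := by
  classical
  set p := Rpoly c d n with hp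
  have hpne : p ≠ 0 := R_ne_zero c d n
  have hM : (Finset.univ.val.map z) ≤ p.roots := by
    rw [Multiset.le_iff_subset (Multiset.Nodup.map hzinj Finset.univ.nodup)]
    intro w hw
    obtain ⟨j, _, rfl⟩ := Multiset.mem_map.1 hw
    rw [mem_roots hpne]
    exact hzroot j
  have hprodeq : (p.roots.map fun a => X - C a).prod = ∏ j, (X - C (z j)) := by
    have hcard : Multiset.card (Finset.univ.val.map z) = n := by simp
    have hle : Multiset.card p.roots ≤ n := le_trans p.card_roots' (R_natDegree c d n).le
    have := Multiset.eq_of_le_of_card_le hM (by rw [hcard]; exact hle)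
    rw [← this, Multiset.map_map]
    rfl
  obtain ⟨q, hq⟩ := p.prod_multiset_X_sub_C_dvd
  rw [hprodeq] at hq
  have hmon : (∏ j, (X - C (z j))).Monic :=
    monic_prod_of_monic _ _ (fun j _ => monic_X_sub_C (z j))
  have hproddeg : (∏ j, (X - C (z j))).natDegree = n := by
    rw [natDegree_prod_of_monic _ _ (fun j _ => monic_X_sub_C (z j))]
    simp
  have hqne : q ≠ 0 := by
    intro h
    rw [h, mul_zero] at hq
    exact hpne hq
  have hqdeg : q.natDegree = 0 := by
    have := R_natDegree c d n
    rw [← hp] at this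
    rw [hq, natDegree_mul hmon.ne_zero hqne, hproddeg] at this
    omega
  have hqC : q = C (q.coeff 0) := eq_C_of_natDegree_eq_zero hqdeg
  have hlead : q.coeff 0 = ∏ k ∈ Icc 1 n, (1 + Complex.I * (c k : ℂ)) := by
    have h1 : p.leadingCoeff = ∏ k ∈ Icc 1 n, (1 + Complex.I * (c k : ℂ)) :=
      R_leadingCoeff c d n
    rw [hq, leadingCoeff_mul, hmon.leadingCoeff, one_mul] at h1
    rw [← h1, hqC, leadingCoeff_C, coeff_C_zero]
  rw [hq, hqC, hlead, mul_comm]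

lemma deriv_eval_root (n : ℕ) (z : Fin n → ℂ) (hzinj : Function.Injective z)
    (hzroot : ∀ j, (Rpoly c d n).eval (z j) = 0) (k : Fin n) :
    (derivative (Rpoly c d n)).eval (z k)
      = (∏ l ∈ Icc 1 n, (1 + Complex.I * (c l : ℂ))) * ∏ j ∈ Finset.univ.erase k, (z k - z j) := by
  classical
  rw [factorization c d n z hzinj hzroot, derivative_C_mul, eval_C_mul]
  congr 1
  rw [← Finset.mul_prod_erase Finset.univ _ (Finset.mem_univ k), derivative_mul, eval_add,
    eval_mul, eval_mul]
  simp only [derivative_sub, derivative_X, derivative_C, sub_zero, eval_one, one_mul,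
    eval_sub, eval_X, eval_C, sub_self, zero_mul, add_zero]
  rw [eval_prod]
  simp

lemma deriv_eval_root_ne (n : ℕ) (z : Fin n → ℂ) (hzinj : Function.Injective z)
    (hzroot : ∀ j, (Rpoly c d n).eval (z j) = 0) (k : Fin n) :
    (derivative (Rpoly c d n)).eval (z k) ≠ 0 := by
  rw [deriv_eval_root c d n z hzinj hzroot k]
  apply mul_ne_zero (lead_ne c n)
  apply Finset.prod_ne_zero_iff.2
  intro j hj
  exact sub_ne_zero.2 fun h => (Finset.mem_erase.1 hj).1 (hzinj h.symm)

lemma exp_half_sq_sub_one (t : ℝ) :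
    Complex.exp ((t : ℂ) * Complex.I) - 1
      = Complex.exp (((t/2 : ℝ) : ℂ) * Complex.I) * (2 * Complex.I * ((Real.sin (t/2) : ℝ) : ℂ)) := by
  rw [expsq t]
  simp only [Complex.exp_mul_I, Complex.ofReal_sin, Complex.ofReal_cos]
  have h := Complex.sin_sq_add_cos_sq (((t/2 : ℝ) : ℂ))
  linear_combination h + (-(Complex.sin (((t/2:ℝ):ℂ)))^2) * Complex.I_sq

lemma deriv_sign (N : ℕ) (ψ : ℕ → ℝ) (hpkg : Pkg c d N ψ) (i : ℕ) (hi : i < N)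
    (hDne : deriv (fn c d N) (ψ i) ≠ 0) :
    0 < (-1)^(i+1) * deriv (fn c d N) (ψ i) := by
  obtain ⟨hmono, hmem, hzero, _, hgap⟩ := hpkg
  set t := ψ i with ht
  set D := deriv (fn c d N) t with hD
  set ℓ : ℝ := if i = 0 then 0 else ψ (i-1) with hℓdef
  have hℓ0 : 0 ≤ ℓ := by
    rw [hℓdef]
    split
    · exact le_refl 0
    · exact (hmem (i-1) (by omega)).1.le
  have hℓt : ℓ < t := by
    rw [hℓdef]
    split
    · exact (hmem i hi).1
    · exact hmono (i-1) i (by omega) hi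
  by_contra hcon
  -- then (-1)^i * D > 0
  have hsq : ((-1:ℝ))^i * ((-1:ℝ))^i = 1 := by
    rw [← pow_add]
    have hev : Even (i+i) := ⟨i, by ring⟩
    exact hev.neg_one_pow
  have hiD : 0 < (-1)^i * D := by
    rw [pow_succ] at hcon
    push_neg at hcon
    rcases lt_or_eq_of_le hcon with h | h
    · nlinarith
    · exfalso
      rcases mul_eq_zero.1 h with h2 | h2
      · nlinarith
      · exact hDne h2
  have hder : HasDerivAt (fn c d N) D t := (fn_differentiable c d N t).hasDerivAt
  have hslope := hasDerivAt_iff_tendsto_slope.1 hder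
  have hp : ∀ᶠ u in nhds D, |u - D| < |D| := by
    filter_upwards [Metric.ball_mem_nhds D (abs_pos.2 hDne)] with u hu
    rwa [Metric.mem_ball, Real.dist_eq] at hu
  have hev1 := hslope.eventually hp
  have hev1' : ∀ᶠ y in nhdsWithin t (Set.Iio t), |slope (fn c d N) t y - D| < |D| :=
    hev1.filter_mono (nhdsWithin_mono t fun y hy => ne_of_lt hy)
  have hev2 : Set.Ioo ℓ t ∈ nhdsWithin t (Set.Iio t) :=
    Ioo_mem_nhdsLT_of_mem ⟨hℓt, le_refl t⟩
  obtain ⟨y, hy1, hy2⟩ := (hev1'.and (Filter.eventually_of_mem hev2 (fun y hy => hy))).exists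
  set s := slope (fn c d N) t y with hs
  have hyt : y ≠ t := hy2.2.ne
  have hfnt : fn c d N t = 0 := by rw [ht]; exact hzero i hi
  have hfny : fn c d N y = s * (y - t) := by
    rw [hs, slope_def_field, hfnt, sub_zero, div_mul_cancel₀ _ (sub_ne_zero.2 hyt)]
  have hsD : 0 < s * D := by
    rcases lt_or_gt_of_ne hDne with h | h
    · rw [abs_of_neg h] at hy1
      have := abs_sub_lt_iff.1 hy1
      nlinarith
    · rw [abs_of_pos h] at hy1
      have := abs_sub_lt_iff.1 hy1
      nlinarith
  have hsne : s ≠ 0 := by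
    intro h
    rw [h, zero_mul] at hsD
    exact lt_irrefl 0 hsD
  have hfnyne : fn c d N y ≠ 0 := by
    rw [hfny]
    exact mul_ne_zero hsne (sub_ne_zero.2 hyt)
  have hy0 : 0 < y := lt_of_le_of_lt hℓ0 hy2.1
  have hy2π : y < 2*Real.pi := lt_trans hy2.2 (hmem i hi).2
  have hgy := hgap y hy0 hy2π hfnyne i hi.le ?_ ?_
  · -- contradiction: (-1)^i * fn N y should be positive but is negative
    rw [hfny] at hgy
    have hyts : y - t < 0 := by
      have := hy2.2
      linarith
    have hA : 0 < ((-1:ℝ))^i * s := by nlinarith [mul_pos hiD hsD, sq_nonneg D]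
    nlinarith [mul_pos hA (show (0:ℝ) < t - y by linarith)]
  · intro a ha
    have haℓ : ψ a ≤ ℓ := by
      rw [hℓdef]
      split
      · omega
      · rcases Nat.lt_or_ge a (i-1) with h | h
        · exact (hmono a (i-1) h (by omega)).le
        · have : a = i - 1 := by omega
          rw [this]
    exact lt_of_le_of_lt haℓ hy2.1
  · intro a ha1 ha2
    rcases Nat.eq_or_lt_of_le ha1 with rfl | h
    · exact hy2.2
    · exact lt_trans hy2.2 (hmono i a h ha2)

lemma prod_Icc_split (x : ℕ → ℂ) (m : ℕ) :
    ∏ k ∈ Icc 1 (m+1), x k = x 1 * ∏ k ∈ Icc 2 (m+1), x k := by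
  rw [show Finset.Icc 1 (m+1) = insert 1 (Finset.Icc 2 (m+1)) by
    ext k; simp only [Finset.mem_Icc, Finset.mem_insert]; omega]
  rw [Finset.prod_insert (by simp)]

end Stmt9

open Stmt9

set_option maxHeartbeats 2000000 in
/-- For `n ≥ 1`, `Â_n(z) = ((1 + i c_1)/(2z))[R_n(z) + ((1 - i c_1)/(2 d_1))(z - 1) Q_n(z)]`
is a polynomial of degree `n - 1` with leading coefficient `∏_{k=1}^n (1 + i c_k)`;
with `z_{n,1}, …, z_{n,n}` the simple zeros of `R_n`, the numbers
`λ̂_{n,j} = Â_n(z_{n,j})/R_n'(z_{n,j})` are strictly positive reals summing to `1`, and one has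
the partial fraction decomposition `Â_n(z)/R_n(z) = Σ_j λ̂_{n,j}/(z - z_{n,j})`. -/
theorem stmt9 (c d : ℕ → ℝ) (hd1 : d 1 ≠ 0)
    (hd : IsPositiveChainSeq fun n => d (n + 1))
    (n : ℕ) (hn : 1 ≤ n)
    (z : Fin n → ℂ) (hzinj : Function.Injective z)
    (hzroot : ∀ j, (Rpoly c d n).eval (z j) = 0)
    (hzall : ∀ w : ℂ, (Rpoly c d n).eval w = 0 → ∃ j, w = z j) :
    ∃ A : Polynomial ℂ,
      C 2 * X * A =
        C (1 + Complex.I * (c 1 : ℂ)) *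
          (Rpoly c d n +
            C ((1 - Complex.I * (c 1 : ℂ)) / (2 * (d 1 : ℂ))) * (X - C 1) * Qpoly c d n) ∧
      A.natDegree = n - 1 ∧
      A.leadingCoeff = ∏ k ∈ Finset.Icc 1 n, (1 + Complex.I * (c k : ℂ)) ∧
      ∃ lam : Fin n → ℝ,
        (∀ j, 0 < lam j ∧
          (lam j : ℂ) = A.eval (z j) / (Polynomial.derivative (Rpoly c d n)).eval (z j)) ∧
        (∑ j, lam j) = 1 ∧
        ∀ w : ℂ, (∀ j, w ≠ z j) →
          A.eval w / (Rpoly c d n).eval w = ∑ j, (lam j : ℂ) / (w - z j) := by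
  classical
  obtain ⟨m, rfl⟩ : ∃ m, n = m + 1 := ⟨n - 1, by omega⟩
  obtain ⟨g, hg0, hg0', hgp', hdg'⟩ := hd
  have hg1 : ∀ k, g k < 1 := by
    intro k
    cases k with
    | zero => exact hg0'
    | succ j => exact (hgp' (j+1) (by omega)).2
  have hgp : ∀ k, 1 ≤ k → 0 < g k := fun k hk => (hgp' k hk).1
  have hdg : ∀ k, d (k+2) = (1 - g k) * g (k+1) := by
    intro k
    have := hdg' (k+1) (by omega)
    simpa using this
  have hun : ∀ k, 0 < un d k := un_pos d g hg0 hg1 hgp hdg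
  have hdpos : ∀ k, 2 ≤ k → 0 < d k := by
    intro k hk
    obtain ⟨j, rfl⟩ : ∃ j, k = j + 2 := ⟨k - 2, by omega⟩
    rw [hdg j]
    have := hg1 j
    have := hgp (j+1) (by omega)
    nlinarith
  have hd1C : ((d 1 : ℝ) : ℂ) ≠ 0 := Complex.ofReal_ne_zero.2 hd1
  set L : ℂ := ∏ k ∈ Icc 1 (m+1), (1 + Complex.I * (c k : ℂ)) with hLdef
  set L₂ : ℂ := ∏ k ∈ Icc 2 (m+1), (1 + Complex.I * (c k : ℂ)) with hL2def
  have hLsplit : L = (1 + Complex.I * (c 1 : ℂ)) * L₂ := prod_Icc_split _ m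
  have hLne : L ≠ 0 := lead_ne c (m+1)
  have hL2ne : L₂ ≠ 0 := lead2_ne c (m+1)
  set p := Rpoly c d (m+1) with hpdef
  set Q := Qpoly c d (m+1) with hQdef
  set κ : ℂ := (1 - Complex.I * (c 1 : ℂ)) / (2 * (d 1 : ℂ)) with hκdef
  set B : Polynomial ℂ := C (1 + Complex.I * (c 1 : ℂ)) * (p + C κ * (X - C 1) * Q) with hBdef
  have hκd : κ * (2 * (d 1 : ℂ)) = 1 - Complex.I * (c 1 : ℂ) := by
    rw [hκdef]
    field_simp
  -- B has zero constant coefficient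
  have hB0 : B.coeff 0 = 0 := by
    rw [coeff_zero_eq_eval_zero, hBdef]
    simp only [eval_mul, eval_add, eval_C, eval_sub, eval_X, zero_sub]
    rw [hpdef, R_eval0 c d (m+1), hQdef, Q_eval0 c d m, prod_Icc_split (fun k => 1 - Complex.I * (c k : ℂ)) m]
    rw [hκdef]
    field_simp
    ring
  set A : Polynomial ℂ := C (2⁻¹ : ℂ) * B.divX with hAdef
  have hA : C 2 * X * A = B := by
    have hx := X_mul_divX_add B
    rw [hB0, map_zero, add_zero] at hx
    calc C 2 * X * A = (C 2 * C 2⁻¹) * (X * B.divX) := by rw [hAdef]; ring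
      _ = X * B.divX := by rw [← C_mul]; norm_num
      _ = B := hx
  -- coefficients of B
  have hQdeg_le : Q.natDegree ≤ m := by
    have := Q_deg_le c d (m+1)
    simpa using this
  have hQcoeff : Q.coeff m = 2 * (d 1 : ℂ) * L₂ := Q_coeff c d m
  have hBcoeff : B.coeff (m+1) = 2 * L := by
    rw [hBdef, coeff_C_mul, coeff_add, mul_assoc, coeff_C_mul]
    have h1 : ((X - C 1) * Q).coeff (m+1) = Q.coeff m := by
      rw [sub_mul, coeff_sub, coeff_X_mul, coeff_C_mul,
        coeff_eq_zero_of_natDegree_lt (show Q.natDegree < m+1 by omega), mul_zero, sub_zero]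
    rw [h1, hQcoeff, hpdef, R_coeff c d (m+1), ← hLdef]
    linear_combination ((1 + Complex.I*(c 1:ℂ))*L₂) * hκd + (Complex.I*(c 1:ℂ) - 1) * hLsplit
  have hBdeg_le : B.natDegree ≤ m+1 := by
    rw [hBdef]
    refine (natDegree_C_mul_le _ _).trans ((natDegree_add_le _ _).trans (max_le ?_ ?_))
    · rw [hpdef]; exact R_deg_le c d (m+1)
    · refine natDegree_mul_le.trans ?_
      have h2 : (C κ * (X - C 1)).natDegree ≤ 1 := by
        refine natDegree_mul_le.trans ?_
        rw [natDegree_C, natDegree_X_sub_C]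
      omega
  have hBne : B ≠ 0 := by
    intro h
    have := hBcoeff
    rw [h, coeff_zero] at this
    exact mul_ne_zero two_ne_zero hLne this.symm
  have hBdeg : B.natDegree = m+1 :=
    le_antisymm hBdeg_le (le_natDegree_of_ne_zero
      (by rw [hBcoeff]; exact mul_ne_zero two_ne_zero hLne))
  have hAne : A ≠ 0 := by
    intro h
    rw [h, mul_zero] at hA
    exact hBne hA.symm
  have hC2Xne : (C (2:ℂ) * X) ≠ 0 := by
    intro h
    have := congrArg (fun q => coeff q 1) h
    simp at this
  have hC2Xdeg : (C (2:ℂ) * X).natDegree = 1 := by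
    rw [natDegree_C_mul (two_ne_zero), natDegree_X]
  have hAdeg : A.natDegree = m := by
    have h := congrArg natDegree hA
    rw [natDegree_mul hC2Xne hAne, hC2Xdeg, hBdeg] at h
    omega
  have hAlead : A.leadingCoeff = L := by
    have h := congrArg leadingCoeff hA
    rw [leadingCoeff_mul] at h
    have hl1 : (C (2:ℂ) * X).leadingCoeff = 2 := by
      rw [leadingCoeff, hC2Xdeg, coeff_C_mul, coeff_X_one, mul_one]
    have hl2 : B.leadingCoeff = 2 * L := by rw [leadingCoeff, hBdeg, hBcoeff]
    rw [hl1, hl2] at h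
    exact mul_left_cancel₀ (two_ne_zero' ℂ) h
  -- the zeros as angles
  obtain ⟨ψ, hpkg⟩ := pkg_exists c d hun hdpos (m+1)
  obtain ⟨hψmono, hψmem, hψzero, hψsign, hψgap⟩ := hpkg
  have hψroot : ∀ i : Fin (m+1), p.eval (Complex.exp (((ψ i : ℝ) : ℂ) * Complex.I)) = 0 := by
    intro i
    rw [hpdef, R_eval_exp c d (m+1) (ψ i), hψzero i i.isLt]
    simp
  have hα : ∀ i : Fin (m+1), ∃ k : Fin (m+1), Complex.exp (((ψ i : ℝ) : ℂ) * Complex.I) = z k :=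
    fun i => hzall _ (hψroot i)
  choose α hαeq using hα
  have hαinj : Function.Injective α := by
    intro i j hij
    have h1 : Complex.exp (((ψ i : ℝ) : ℂ) * Complex.I)
        = Complex.exp (((ψ j : ℝ) : ℂ) * Complex.I) := by
      rw [hαeq i, hαeq j, hij]
    have h2 : (ψ i : ℝ) = ψ j :=
      exp_inj (hψmem i i.isLt).1.le (hψmem i i.isLt).2 (hψmem j j.isLt).1.le
        (hψmem j j.isLt).2 h1
    by_contra hne
    have hne' : (i : ℕ) ≠ (j : ℕ) := fun h => hne (Fin.ext h)
    rcases Nat.lt_or_ge (i : ℕ) (j : ℕ) with h | h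
    · exact absurd h2 (hψmono i j h j.isLt).ne
    · exact absurd h2.symm (hψmono j i (by omega) i.isLt).ne
  have hαsurj : Function.Surjective α := Finite.injective_iff_surjective.1 hαinj
  choose β hβ using hαsurj
  have hzk : ∀ k : Fin (m+1), z k = Complex.exp (((ψ (β k) : ℝ) : ℂ) * Complex.I) := by
    intro k
    have h := hαeq (β k)
    rw [hβ k] at h
    exact h.symm
  -- the weights
  set Pr : ℝ := ∏ j ∈ Icc 2 (m+1), (4 * d j) with hPrdef
  have hPrpos : 0 < Pr := by
    rw [hPrdef]
    apply Finset.prod_pos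
    intro j hj
    have := hdpos j (Finset.mem_Icc.1 hj).1
    linarith
  set lam : Fin (m+1) → ℝ := fun k =>
    (-(1 + (c 1)^2) * Pr * Real.sin (ψ (β k) / 2)) /
      (fn c d m (ψ (β k)) * deriv (fn c d (m+1)) (ψ (β k))) with hlamdef
  have hper : (1 + Complex.I*(c 1:ℂ)) * (1 - Complex.I*(c 1:ℂ)) = 1 + ((c 1:ℝ):ℂ)^2 := by
    linear_combination (-((c 1:ℝ):ℂ)^2) * Complex.I_sq
  have hPC : (∏ j ∈ Icc 2 (m+1), (4*((d j:ℝ):ℂ))) = ((Pr:ℝ):ℂ) := by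
    rw [hPrdef]
    push_cast
    rfl
  -- the key fact, for each k
  have hkey : ∀ k : Fin (m+1), 0 < lam k ∧
      ((lam k : ℝ) : ℂ) = A.eval (z k) / (derivative p).eval (z k) := by
    intro k
    have hilt : ((β k : ℕ)) < m+1 := (β k).isLt
    set i : ℕ := (β k : ℕ) with hidef
    set t : ℝ := ψ i with htdef
    have htmem := hψmem i hilt
    have htzero : fn c d (m+1) t = 0 := hψzero i hilt
    have hπ := Real.pi_pos
    have hsin : 0 < Real.sin (t/2) :=
      Real.sin_pos_of_pos_of_lt_pi (by linarith [htmem.1]) (by linarith [htmem.2])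
    have hf1sign : 0 < (-1:ℝ)^i * fn c d m t := by
      have := hψsign i hilt
      simpa using this
    have hf1ne : fn c d m t ≠ 0 := by
      intro h
      rw [h, mul_zero] at hf1sign
      exact lt_irrefl _ hf1sign
    set D : ℝ := deriv (fn c d (m+1)) t with hDdef
    have hz : z k = Complex.exp ((t:ℂ) * Complex.I) := hzk k
    have hzne : z k ≠ 0 := by rw [hz]; exact Complex.exp_ne_zero _
    set E : ℂ := Complex.exp (((t/2:ℝ):ℂ) * Complex.I) with hEdef
    have hEne : E ≠ 0 := Complex.exp_ne_zero _
    have hzE : z k = E^2 := by rw [hz, expsq t]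
    have hR'ne : (derivative p).eval (z k) ≠ 0 := by
      rw [hpdef]
      exact deriv_eval_root_ne c d (m+1) z hzinj (by rw [← hpdef]; exact hzroot) k
    have hDC : Complex.I * E^2 * (derivative p).eval (z k) = E^(m+1) * ((D:ℝ):ℂ) := by
      have h := deriv_identity c d (m+1) t htzero
      rw [expsq t, ← hEdef, ← hDdef] at h
      rw [hzE, hpdef]
      exact h
    have hDne : D ≠ 0 := by
      intro h0
      rw [h0] at hDC
      simp only [Complex.ofReal_zero, mul_zero] at hDC
      rcases mul_eq_zero.1 hDC with h | h
      · rcases mul_eq_zero.1 h with h | h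
        · exact Complex.I_ne_zero h
        · exact pow_ne_zero 2 hEne h
      · exact hR'ne h
    have hDsign : 0 < (-1:ℝ)^(i+1) * D :=
      deriv_sign c d (m+1) ψ ⟨hψmono, hψmem, hψzero, hψsign, hψgap⟩ i hilt hDne
    -- positivity of lam
    have hden_neg : fn c d m t * D < 0 := by
      rcases Nat.even_or_odd i with he | ho
      · rw [he.neg_one_pow, one_mul] at hf1sign
        have hodd : Odd (i+1) := Even.add_one he
        rw [hodd.neg_one_pow] at hDsign
        nlinarith
      · rw [ho.neg_one_pow] at hf1sign
        have heven : Even (i+1) := Odd.add_one ho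
        rw [heven.neg_one_pow, one_mul] at hDsign
        nlinarith
    have hlam_eq : lam k = (-(1 + (c 1)^2) * Pr * Real.sin (t / 2)) /
        (fn c d m t * deriv (fn c d (m+1)) t) := rfl
    have hlam_pos : 0 < lam k := by
      rw [hlam_eq]
      apply div_pos_iff.2
      refine Or.inr ⟨?_, ?_⟩
      · nlinarith [mul_pos (mul_pos (show (0:ℝ) < 1 + (c 1)^2 by nlinarith [sq_nonneg (c 1)]) hPrpos) hsin]
      · rw [← hDdef]; exact hden_neg
    refine ⟨hlam_pos, ?_⟩
    rw [eq_div_iff hR'ne]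
    -- notation
    set a : ℂ := Complex.I * ((c 1 : ℝ) : ℂ) with hadef
    set sC : ℂ := ((Real.sin (t/2) : ℝ) : ℂ) with hsCdef
    set f1C : ℂ := ((fn c d m t : ℝ) : ℂ) with hf1Cdef
    set DC : ℂ := ((D : ℝ) : ℂ) with hDCdef
    set PrC : ℂ := ((Pr : ℝ) : ℂ) with hPrCdef
    set q' : ℂ := Q.eval (z k) with hq'def
    set r1 : ℂ := (Rpoly c d m).eval (z k) with hr1def
    set w : ℂ := (derivative p).eval (z k) with hwdef
    set a' : ℂ := A.eval (z k) with ha'def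
    -- facts
    have hq_r1 : q' * r1 = 2*((d 1:ℝ):ℂ) * PrC * (E^2)^m := by
      have hw := wronski c d m
      have h2 := congrArg (eval (z k)) hw
      simp only [eval_sub, eval_mul, eval_neg, eval_C, eval_pow, eval_X] at h2
      rw [← hpdef] at h2
      rw [hzroot k, zero_mul, zero_sub] at h2
      rw [hq'def, hr1def, hQdef, ← hzE]
      linear_combination (-1:ℂ) * h2 + (2*((d 1:ℝ):ℂ)*(z k)^m) * hPC
    have hr1E : r1 = E^m * f1C := by
      rw [hr1def, hz]
      exact R_eval_exp c d m t
    have hr1ne : r1 ≠ 0 := by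
      rw [hr1E]
      exact mul_ne_zero (pow_ne_zero _ hEne) (by
        rw [hf1Cdef]
        exact_mod_cast hf1ne)
    have hsub2 : E^2 - 1 = E * (2*Complex.I*sC) := by
      rw [← expsq t]
      exact exp_half_sq_sub_one t
    have hlamC : ((lam k:ℝ):ℂ) * f1C * DC = -(1+((c 1:ℝ):ℂ)^2) * PrC * sC := by
      have hre : lam k * (fn c d m t * D) = -(1+(c 1)^2)*Pr*Real.sin (t/2) := by
        rw [hlam_eq, ← hDdef, div_mul_cancel₀ _ hden_neg.ne]
      have h2 := congrArg (Complex.ofReal) hre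
      push_cast at h2
      rw [hsCdef, hf1Cdef, hDCdef, hPrCdef]
      push_cast
      linear_combination h2
    have hBk : B.eval (z k) = (1 + a) * (κ * ((z k) - 1) * q') := by
      rw [hBdef]
      simp only [eval_mul, eval_add, eval_C, eval_sub, eval_X, eval_one]
      rw [hzroot k, zero_add, hadef, hq'def]
    have hAB : 2*E^2*a' = (1+a)*(κ*(E^2-1)*q') := by
      have h3 := congrArg (eval (z k)) hA
      simp only [eval_mul, eval_C, eval_X] at h3
      rw [hBk, ← ha'def] at h3
      linear_combination h3 + ((1+a)*κ*q' - 2*a') * hzE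
    -- the grand computation
    show ((lam k:ℝ):ℂ) * w = a'
    have hT : (2*E^2*(r1*(Complex.I*E^2))) ≠ 0 := by
      apply mul_ne_zero
      · exact mul_ne_zero two_ne_zero (pow_ne_zero _ hEne)
      · exact mul_ne_zero hr1ne (mul_ne_zero Complex.I_ne_zero (pow_ne_zero _ hEne))
    refine mul_right_cancel₀ hT ?_
    have s1 : a' * (2*E^2*(r1*(Complex.I*E^2)))
        = (1+a)*(κ*(E^2-1)*q') * (Complex.I*r1*E^2) := by
      linear_combination (Complex.I*r1*E^2) * hAB
    have s2 : (1+a)*(κ*(E^2-1)*q')*(Complex.I*r1*E^2)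
        = (1+a)*κ*(E*(2*Complex.I*sC))*(Complex.I*E^2)*(q'*r1) := by
      linear_combination ((1+a)*κ*q'*Complex.I*r1*E^2) * hsub2
    have s3 : (1+a)*κ*(E*(2*Complex.I*sC))*(Complex.I*E^2)*(q'*r1)
        = (1+a)*κ*(E*(2*Complex.I*sC))*(Complex.I*E^2)*(2*((d 1:ℝ):ℂ)*PrC*(E^2)^m) := by
      rw [hq_r1]
    have s4 : (1+a)*κ*(E*(2*Complex.I*sC))*(Complex.I*E^2)*(2*((d 1:ℝ):ℂ)*PrC*(E^2)^m)
        = (1+a)*(1-a)*((E*(2*Complex.I*sC))*(Complex.I*E^2)*(PrC*(E^2)^m)) := by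
      have hκd' : κ * (2 * ((d 1:ℝ):ℂ)) = 1 - a := by rw [hadef]; exact hκd
      linear_combination ((1+a)*(E*(2*Complex.I*sC))*(Complex.I*E^2)*PrC*(E^2)^m) * hκd'
    have t1 : ((lam k:ℝ):ℂ) * w * (2*E^2*(r1*(Complex.I*E^2)))
        = ((lam k:ℝ):ℂ) * 2 * r1 * E^2 * (Complex.I*E^2*w) := by ring
    have t2 : ((lam k:ℝ):ℂ) * 2 * r1 * E^2 * (Complex.I*E^2*w)
        = ((lam k:ℝ):ℂ) * 2 * (E^m*f1C) * E^2 * (E^(m+1)*DC) := by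
      rw [hDC, hr1E, hDCdef]
    have t3 : ((lam k:ℝ):ℂ) * 2 * (E^m*f1C) * E^2 * (E^(m+1)*DC)
        = 2*E^2*E^(m+1)*E^m*(((lam k:ℝ):ℂ)*f1C*DC) := by ring
    have hfin : 2*E^2*E^(m+1)*E^m*(-(1+((c 1:ℝ):ℂ)^2) * PrC * sC)
        = (1+a)*(1-a)*((E*(2*Complex.I*sC))*(Complex.I*E^2)*(PrC*(E^2)^m)) := by
      have hper' : (1 + a) * (1 - a) = 1 + ((c 1:ℝ):ℂ)^2 := by rw [hadef]; exact hper
      rw [hper']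
      linear_combination ((-(2:ℂ))*(1+((c 1:ℝ):ℂ)^2)*PrC*sC*(E^2*E^(m+1)*E^m)) * Complex.I_sq
    rw [t1, t2, t3, hlamC, hfin, s1, s2, s3, s4]
  -- factorization and interpolation set-up
  have hzroot' : ∀ j, (Rpoly c d (m+1)).eval (z j) = 0 := by
    intro j
    rw [← hpdef]
    exact hzroot j
  have hfact : p = C L * Lagrange.nodal Finset.univ z := by
    rw [hpdef, hLdef, Lagrange.nodal]
    exact factorization c d (m+1) z hzinj hzroot'
  have hvinj : Set.InjOn z ↑(Finset.univ : Finset (Fin (m+1))) := fun x _ y _ h => hzinj h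
  have hAdeglt : A.degree < ((Finset.univ : Finset (Fin (m+1))).card : WithBot ℕ) := by
    rw [degree_eq_natDegree hAne, hAdeg, Finset.card_univ, Fintype.card_fin]
    exact_mod_cast Nat.lt_succ_self m
  have hinterp := Lagrange.eq_interpolate hvinj hAdeglt
  have hprodne : ∀ i : Fin (m+1), (∏ j ∈ Finset.univ.erase i, (z i - z j)) ≠ 0 := by
    intro i
    apply Finset.prod_ne_zero_iff.2
    intro j hj
    exact sub_ne_zero.2 fun h => (Finset.mem_erase.1 hj).1 (hzinj h.symm)
  have hnwL : ∀ i : Fin (m+1), A.eval (z i) * Lagrange.nodalWeight Finset.univ z i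
      = ((lam i : ℝ) : ℂ) * L := by
    intro i
    have h1 := (hkey i).2
    have h2 : (derivative p).eval (z i) = L * ∏ j ∈ Finset.univ.erase i, (z i - z j) := by
      rw [hpdef, hLdef]
      exact deriv_eval_root c d (m+1) z hzinj hzroot' i
    have h3 : Lagrange.nodalWeight Finset.univ z i
        = (∏ j ∈ Finset.univ.erase i, (z i - z j))⁻¹ := by
      rw [Lagrange.nodalWeight, Finset.prod_inv_distrib]
    rw [h1, h2, h3]
    field_simp
  have hbc : ∀ i : Fin (m+1), (Lagrange.basis Finset.univ z i).coeff m
      = Lagrange.nodalWeight Finset.univ z i := by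
    intro i
    have hb : Lagrange.basis Finset.univ z i
        = C (Lagrange.nodalWeight Finset.univ z i) * Lagrange.nodal (Finset.univ.erase i) z := by
      rw [Lagrange.basis, Lagrange.nodalWeight, Lagrange.nodal]
      simp_rw [Lagrange.basisDivisor]
      rw [Finset.prod_mul_distrib, ← map_prod]
    rw [hb, coeff_C_mul]
    have hdeg : (Lagrange.nodal (Finset.univ.erase i) z).natDegree = m := by
      rw [Lagrange.natDegree_nodal, Finset.card_erase_of_mem (Finset.mem_univ i),
        Finset.card_univ, Fintype.card_fin]
      omega
    have := Lagrange.nodal_monic (s := Finset.univ.erase i) (v := z)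
    rw [Monic, leadingCoeff, hdeg] at this
    rw [this, mul_one]
  have hsumC : (∑ i, ((lam i : ℝ) : ℂ)) = 1 := by
    have hcoeff := congrArg (fun q : Polynomial ℂ => q.coeff m) hinterp
    simp only [Lagrange.interpolate_apply, finset_sum_coeff, coeff_C_mul] at hcoeff
    have hAcoeff : A.coeff m = L := by
      rw [← hAdeg, ← leadingCoeff, hAlead]
    rw [hAcoeff] at hcoeff
    have hsum2 : ∑ i, A.eval (z i) * Lagrange.nodalWeight Finset.univ z i = L := by
      rw [hcoeff]
      apply Finset.sum_congr rfl
      intro i _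
      rw [hbc i]
    rw [show (∑ i, A.eval (z i) * Lagrange.nodalWeight Finset.univ z i)
        = ∑ i, ((lam i : ℝ) : ℂ) * L from Finset.sum_congr rfl (fun i _ => hnwL i)] at hsum2
    rw [← Finset.sum_mul] at hsum2
    exact mul_right_cancel₀ hLne (by rw [hsum2, one_mul])
  refine ⟨A, hA, by simpa using hAdeg, by rw [hAlead], lam, hkey, ?_, ?_⟩
  · -- sum of lam = 1
    have : ((∑ j, lam j : ℝ) : ℂ) = ((1:ℝ) : ℂ) := by
      push_cast
      push_cast at hsumC
      exact hsumC
    exact_mod_cast this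
  · -- partial fractions
    intro w hw
    have hRw : p.eval w ≠ 0 := by
      intro h
      obtain ⟨j, rfl⟩ := hzall w h
      exact hw j rfl
    have hnodal_eval : (Lagrange.nodal Finset.univ z).eval w = ∏ i, (w - z i) :=
      Lagrange.eval_nodal
    have hnodal_ne : (Lagrange.nodal Finset.univ z).eval w ≠ 0 := by
      rw [hnodal_eval]
      apply Finset.prod_ne_zero_iff.2
      intro i _
      exact sub_ne_zero.2 (hw i)
    have hAev := Lagrange.eval_interpolate_not_at_node (s := Finset.univ) (v := z)
      (fun i => A.eval (z i)) (x := w) (fun i _ => hw i)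
    rw [← hinterp] at hAev
    have hpev : p.eval w = L * (Lagrange.nodal Finset.univ z).eval w := by
      rw [hfact, eval_mul, eval_C]
    rw [hAev, hpev]
    rw [show (Lagrange.nodal Finset.univ z).eval w *
        (∑ i, Lagrange.nodalWeight Finset.univ z i * (w - z i)⁻¹ * A.eval (z i)) /
        (L * (Lagrange.nodal Finset.univ z).eval w)
        = (∑ i, Lagrange.nodalWeight Finset.univ z i * (w - z i)⁻¹ * A.eval (z i)) / L by
      rw [mul_comm L _, mul_div_mul_left _ _ hnodal_ne]]
    rw [Finset.sum_div]
    apply Finset.sum_congr rfl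
    intro i _
    have h1 := hnwL i
    have hwz : w - z i ≠ 0 := sub_ne_zero.2 (hw i)
    field_simp
    linear_combination h1
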